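/- Let R be a field, G a group, H a normal subgroup of G, and V an irreducible R-linear representation of G. If the restriction of V to H contains an irreducible H-subrepresentation, then the restriction of V to H is semisimple. -/

import Mathlib

namespace CliffordAux

variable {R G V : Type*} [Field R] [Group G] [AddCommGroup V] [Module R V]
variable {H : Subgroup G} {ρ : Representation R G V}

/-- The restricted representation. -/
noncomputable abbrev ρH (H : Subgroup G) (ρ : Representation R G V) : Representation R ↥H V :=
  ρ.comp H.subtype

theorem smul_def (a : MonoidAlgebra R ↥H) (x : (ρH H ρ).asModule) :
    a • x = (ρH H ρ).asAlgebraHom a x := rfl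

theorem rho_rho (a b : G) (w : V) : ρ a (ρ b w) = ρ (a * b) w := by
  rw [map_mul]; rfl

theorem rho_injective (g : G) : Function.Injective (ρ g) := fun x y hxy => by
  have := congrArg (ρ g⁻¹) hxy
  rwa [rho_rho, rho_rho, inv_mul_cancel, map_one, Module.End.one_apply,
    Module.End.one_apply] at this

theorem map_invariant [H.Normal] (g : G) (W : Submodule R V)
    (hW : ∀ h ∈ H, ∀ v ∈ W, ρ h v ∈ W) :
    ∀ h ∈ H, ∀ v ∈ W.map (ρ g), ρ h v ∈ W.map (ρ g) := by
  rintro h hh v ⟨w, hw, rfl⟩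
  refine ⟨ρ (g⁻¹ * h * g) w, hW _ (by simpa using ‹H.Normal›.conj_mem h hh g⁻¹) w hw, ?_⟩
  rw [rho_rho, rho_rho]
  congr 1
  group

theorem comp_inv_map (g : G) (W : Submodule R V) : (W.map (ρ g)).map (ρ g⁻¹) = W := by
  rw [← Submodule.map_comp]
  convert Submodule.map_id W using 2
  ext x
  simp [rho_rho]

/-- An `H`-invariant submodule as a `MonoidAlgebra R H`-submodule. -/
def invSub (W : Submodule R V) (hW : ∀ h ∈ H, ∀ v ∈ W, ρ h v ∈ W) :
    Submodule (MonoidAlgebra R ↥H) (ρH H ρ).asModule where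
  carrier := show Set ((ρH H ρ).asModule) from (W : Set V)
  add_mem' := fun ha hb => W.add_mem ha hb
  zero_mem' := W.zero_mem
  smul_mem' := fun a x hx => by
    show (ρH H ρ).asAlgebraHom a x ∈ W
    induction a using MonoidAlgebra.induction_on with
    | of h => simpa using hW h h.2 x hx
    | add f g hf hg => rw [map_add]; exact W.add_mem hf hg
    | smul r f hf => rw [map_smul]; exact W.smul_mem r hf

theorem mem_invSub {W : Submodule R V} {hW : ∀ h ∈ H, ∀ v ∈ W, ρ h v ∈ W} {x : V} :
    x ∈ invSub W hW ↔ x ∈ W := ⟨fun h => h, fun h => h⟩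

/-- A `MonoidAlgebra R H`-submodule as an `R`-submodule. -/
def toR (P : Submodule (MonoidAlgebra R ↥H) (ρH H ρ).asModule) : Submodule R V where
  carrier := show Set V from (P : Set ((ρH H ρ).asModule))
  add_mem' := fun ha hb => P.add_mem ha hb
  zero_mem' := P.zero_mem
  smul_mem' := fun r x hx => by
    have h1 : (algebraMap R (MonoidAlgebra R ↥H) r) • (show (ρH H ρ).asModule from x) ∈ P :=
      P.smul_mem _ hx
    have h2 : (algebraMap R (MonoidAlgebra R ↥H) r) • (show (ρH H ρ).asModule from x) = r • x := by
      rw [smul_def, AlgHom.commutes, Module.algebraMap_end_apply]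
    rwa [h2] at h1

theorem mem_toR {P : Submodule (MonoidAlgebra R ↥H) (ρH H ρ).asModule} {x : V} :
    x ∈ toR P ↔ (show (ρH H ρ).asModule from x) ∈ P := ⟨fun h => h, fun h => h⟩

theorem toR_invariant (P : Submodule (MonoidAlgebra R ↥H) (ρH H ρ).asModule) :
    ∀ h ∈ H, ∀ v ∈ toR P, ρ h v ∈ toR P := by
  intro h hh v hv
  have h1 : (MonoidAlgebra.of R ↥H ⟨h, hh⟩) • (show (ρH H ρ).asModule from v) ∈ P :=
    P.smul_mem _ hv
  have h2 : (MonoidAlgebra.of R ↥H ⟨h, hh⟩) • (show (ρH H ρ).asModule from v) = ρ h v := by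
    rw [smul_def, Representation.asAlgebraHom_of]; rfl
  rw [mem_toR]
  rwa [h2] at h1

theorem toR_mono {P Q : Submodule (MonoidAlgebra R ↥H) (ρH H ρ).asModule} (h : P ≤ Q) :
    toR P ≤ toR Q := fun _ hx => h hx

theorem toR_le_toR {P Q : Submodule (MonoidAlgebra R ↥H) (ρH H ρ).asModule} :
    toR P ≤ toR Q ↔ P ≤ Q := ⟨fun h _ hx => h hx, toR_mono⟩

theorem invSub_le_iff {W : Submodule R V} {hW : ∀ h ∈ H, ∀ v ∈ W, ρ h v ∈ W}
    {P : Submodule (MonoidAlgebra R ↥H) (ρH H ρ).asModule} : invSub W hW ≤ P ↔ W ≤ toR P :=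
  ⟨fun h _ hx => h hx, fun h _ hx => h hx⟩

theorem le_invSub_iff {W : Submodule R V} {hW : ∀ h ∈ H, ∀ v ∈ W, ρ h v ∈ W}
    {P : Submodule (MonoidAlgebra R ↥H) (ρH H ρ).asModule} : P ≤ invSub W hW ↔ toR P ≤ W :=
  ⟨fun h _ hx => h hx, fun h _ hx => h hx⟩

theorem invSub_le_invSub {W W' : Submodule R V} {hW : ∀ h ∈ H, ∀ v ∈ W, ρ h v ∈ W}
    {hW' : ∀ h ∈ H, ∀ v ∈ W', ρ h v ∈ W'} : invSub W hW ≤ invSub W' hW' ↔ W ≤ W' :=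
  ⟨fun h _ hx => h hx, fun h _ hx => h hx⟩

theorem toR_invSub {W : Submodule R V} {hW : ∀ h ∈ H, ∀ v ∈ W, ρ h v ∈ W} :
    toR (invSub W hW) = W := by
  ext x; exact ⟨fun h => h, fun h => h⟩

theorem invSub_toR {P : Submodule (MonoidAlgebra R ↥H) (ρH H ρ).asModule}
    (h : ∀ h ∈ H, ∀ v ∈ toR P, ρ h v ∈ toR P) : invSub (toR P) h = P := by
  ext x; exact ⟨fun h => h, fun h => h⟩

theorem toR_eq_bot_iff {P : Submodule (MonoidAlgebra R ↥H) (ρH H ρ).asModule} :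
    toR P = ⊥ ↔ P = ⊥ := by
  constructor <;> intro h <;> ext x
  · have := Submodule.ext_iff.mp h x
    exact this
  · have := Submodule.ext_iff.mp h x
    exact this

theorem toR_top : toR (⊤ : Submodule (MonoidAlgebra R ↥H) (ρH H ρ).asModule) = ⊤ := by
  ext x; simp [mem_toR]; trivial

theorem toR_inj {P Q : Submodule (MonoidAlgebra R ↥H) (ρH H ρ).asModule} (h : toR P = toR Q) :
    P = Q := by
  ext x
  exact Submodule.ext_iff.mp h x

/-- Conjugation by `g` as an order isomorphism of `MonoidAlgebra R H`-submodules. -/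
noncomputable def conj [H.Normal] (g : G) :
    Submodule (MonoidAlgebra R ↥H) (ρH H ρ).asModule ≃o
      Submodule (MonoidAlgebra R ↥H) (ρH H ρ).asModule where
  toFun P := invSub ((toR P).map (ρ g)) (map_invariant g _ (toR_invariant P))
  invFun P := invSub ((toR P).map (ρ g⁻¹)) (map_invariant g⁻¹ _ (toR_invariant P))
  left_inv P := by
    apply toR_inj
    rw [toR_invSub, toR_invSub, comp_inv_map]
  right_inv P := by
    apply toR_inj
    rw [toR_invSub, toR_invSub]
    simpa using comp_inv_map g⁻¹ (toR P)
  map_rel_iff' := by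
    intro P Q
    simp only [Equiv.coe_fn_mk]
    rw [invSub_le_invSub, Submodule.map_le_map_iff_of_injective (rho_injective g), toR_le_toR]

theorem toR_conj [H.Normal] (g : G) (P : Submodule (MonoidAlgebra R ↥H) (ρH H ρ).asModule) :
    toR (conj g P) = (toR P).map (ρ g) :=
  toR_invSub (hW := map_invariant g _ (toR_invariant P))

theorem orderIso_isAtom {α β : Type*} [PartialOrder α] [OrderBot α] [PartialOrder β] [OrderBot β]
    (f : α ≃o β) {a : α} (ha : IsAtom a) : IsAtom (f a) := by
  constructor
  · intro h
    apply ha.1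
    apply f.injective
    rw [h, f.map_bot]
  · intro b hb
    have h1 : f.symm b < a := by
      have := f.symm.strictMono hb
      rwa [f.symm_apply_apply] at this
    have h2 : f.symm b = ⊥ := ha.2 _ h1
    have := congrArg f h2
    rwa [f.apply_symm_apply, f.map_bot] at this

theorem sSup_invariant (s : Set (Submodule R V))
    (hs : ∀ W ∈ s, ∀ h ∈ H, ∀ v ∈ W, ρ h v ∈ W) :
    ∀ h ∈ H, ∀ v ∈ sSup s, ρ h v ∈ sSup s := by
  intro h hh v hv
  have hle : Submodule.map (ρ h) (sSup s) ≤ sSup s := by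
    conv_lhs => rw [sSup_eq_iSup']
    rw [Submodule.map_iSup]
    apply iSup_le
    rintro ⟨W, hWs⟩
    refine le_trans ?_ (le_sSup hWs)
    rintro x ⟨w, hw, rfl⟩
    exact hs W hWs h hh w hw
  exact hle ⟨v, hv, rfl⟩

end CliffordAux

open CliffordAux in
/-- Let `R` be a field, `G` a group, `H` a normal subgroup of `G`, and `V` an irreducible
`R`-linear representation of `G`. If the restriction of `V` to `H` contains an irreducible
`H`-subrepresentation, then the restriction of `V` to `H` is semisimple (every `H`-invariant
subspace admits an `H`-invariant complement). -/
theorem restriction_to_normal_subgroup_semisimple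
    {R G V : Type*} [Field R] [Group G] [AddCommGroup V] [Module R V]
    (H : Subgroup G) [H.Normal] (ρ : Representation R G V)
    (hVne : ∃ v : V, v ≠ 0)
    (hirr : ∀ W : Submodule R V, (∀ g : G, ∀ v ∈ W, ρ g v ∈ W) → W = ⊥ ∨ W = ⊤)
    (hsub : ∃ W : Submodule R V, W ≠ ⊥ ∧ (∀ h ∈ H, ∀ v ∈ W, ρ h v ∈ W) ∧
      ∀ W' ≤ W, (∀ h ∈ H, ∀ v ∈ W', ρ h v ∈ W') → W' = ⊥ ∨ W' = W) :
    ∀ W : Submodule R V, (∀ h ∈ H, ∀ v ∈ W, ρ h v ∈ W) →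
      ∃ W' : Submodule R V, (∀ h ∈ H, ∀ v ∈ W', ρ h v ∈ W') ∧ IsCompl W W' := by
  intro W hW
  obtain ⟨W₀, hW₀ne, hW₀inv, hW₀min⟩ := hsub
  classical
  set 𝒜 : Set (Submodule (MonoidAlgebra R ↥H) (ρH H ρ).asModule) := {P | IsAtom P} with h𝒜
  have hTinv : ∀ h ∈ H, ∀ v ∈ sSup (toR '' 𝒜), ρ h v ∈ sSup (toR '' 𝒜) :=
    sSup_invariant _ (by rintro _ ⟨P, _, rfl⟩; exact toR_invariant P)
  have hT_toR : toR (sSup 𝒜) = sSup (toR '' 𝒜) := by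
    apply le_antisymm
    · rw [← le_invSub_iff (hW := hTinv)]
      apply sSup_le
      intro P hP
      rw [le_invSub_iff]
      exact le_sSup ⟨P, hP, rfl⟩
    · apply sSup_le
      rintro _ ⟨P, hP, rfl⟩
      exact toR_mono (le_sSup hP)
  have hGinv : ∀ g : G, ∀ v ∈ toR (sSup 𝒜), ρ g v ∈ toR (sSup 𝒜) := by
    intro g v hv
    rw [hT_toR] at hv ⊢
    have hle : Submodule.map (ρ g) (sSup (toR '' 𝒜)) ≤ sSup (toR '' 𝒜) := by
      conv_lhs => rw [sSup_eq_iSup']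
      rw [Submodule.map_iSup]
      apply iSup_le
      rintro ⟨_, P, hP, rfl⟩
      rw [← toR_conj g P, ← hT_toR]
      exact toR_mono (le_sSup (orderIso_isAtom (conj g) hP))
    exact hle ⟨v, hv, rfl⟩
  have hatom : IsAtom (invSub W₀ hW₀inv) := by
    constructor
    · intro hbot
      apply hW₀ne
      rw [← toR_invSub (hW := hW₀inv), hbot]
      exact toR_eq_bot_iff.mpr rfl
    · intro B hB
      have hBle : toR B ≤ W₀ := by
        have := toR_mono hB.le
        rwa [toR_invSub] at this
      rcases hW₀min (toR B) hBle (toR_invariant B) with h | h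
      · exact toR_eq_bot_iff.mp h
      · exact absurd (toR_inj (h.trans toR_invSub.symm)) hB.ne
  have hTne : toR (sSup 𝒜) ≠ ⊥ := by
    have hle : W₀ ≤ toR (sSup 𝒜) := by
      rw [← toR_invSub (hW := hW₀inv)]
      exact toR_mono (le_sSup hatom)
    intro hbot
    exact hW₀ne (le_bot_iff.mp (hbot ▸ hle))
  have hTtop : sSup 𝒜 = ⊤ := by
    rcases hirr (toR (sSup 𝒜)) hGinv with h | h
    · exact absurd h hTne
    · exact toR_inj (h.trans toR_top.symm)
  haveI : IsSemisimpleModule (MonoidAlgebra R ↥H) (ρH H ρ).asModule :=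
    by haveI := complementedLattice_of_sSup_atoms_eq_top hTtop; exact ⟨⟩
  obtain ⟨P, hP⟩ := exists_isCompl (invSub W hW)
  refine ⟨toR P, toR_invariant P, ?_, ?_⟩
  · rw [disjoint_iff]
    have hinf : invSub W hW ⊓ P = ⊥ := hP.inf_eq_bot
    ext x
    simp only [Submodule.mem_inf, Submodule.mem_bot]
    constructor
    · rintro ⟨hx1, hx2⟩
      have : (show (ρH H ρ).asModule from x) ∈ invSub W hW ⊓ P :=
        ⟨mem_invSub.mpr hx1, mem_toR.mp hx2⟩
      rw [hinf] at this
      exact this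
    · rintro rfl
      exact ⟨W.zero_mem, (toR P).zero_mem⟩
  · rw [codisjoint_iff]
    have hsupinv : ∀ h ∈ H, ∀ v ∈ W ⊔ toR P, ρ h v ∈ W ⊔ toR P := by
      intro h hh v hv
      have hle : Submodule.map (ρ h) (W ⊔ toR P) ≤ W ⊔ toR P := by
        rw [Submodule.map_sup]
        apply sup_le
        · rintro x ⟨w, hw, rfl⟩
          exact le_sup_left (α := Submodule R V) (hW h hh w hw)
        · rintro x ⟨w, hw, rfl⟩
          exact le_sup_right (α := Submodule R V) (toR_invariant P h hh w hw)
      exact hle ⟨v, hv, rfl⟩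
    have h1 : invSub W hW ⊔ P ≤ invSub (W ⊔ toR P) hsupinv := by
      apply sup_le
      · rw [invSub_le_iff, toR_invSub]
        exact le_sup_left
      · rw [le_invSub_iff]
        exact le_sup_right
    have h2 : invSub (W ⊔ toR P) hsupinv = ⊤ := top_unique (hP.sup_eq_top ▸ h1)
    ext x
    simp only [Submodule.mem_top, iff_true]
    have : (show (ρH H ρ).asModule from x) ∈ invSub (W ⊔ toR P) hsupinv := by
      rw [h2]; trivial
    exact mem_invSub.mp this
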